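/- Let n ≥ 1 and let f : 2^[n] → ℝ be submodular. Then the Lovasz extension f̂ of f is a convex function on the cube [0,1]^n: for all x, y ∈ [0,1]^n and all λ ∈ [0,1], f̂(λx + (1−λ)y) ≤ λ f̂(x) + (1−λ) f̂(y). -/

import Mathlib

/-- A set function `f : 2^[n] → ℝ` is submodular if
`f(S' ∪ {i}) − f(S') ≥ f(S ∪ {i}) − f(S)` for all `S' ⊆ S` and `i ∉ S`. -/
def Submodular {n : ℕ} (f : Finset (Fin n) → ℝ) : Prop :=
  ∀ S' S : Finset (Fin n), S' ⊆ S → ∀ i ∉ S,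
    f (insert i S) - f S ≤ f (insert i S') - f S'

/-- The Lovasz extension `f̂(x) = ∫₀¹ f({i : x_i ≥ τ}) dτ`. -/
noncomputable def lovasz {n : ℕ} (f : Finset (Fin n) → ℝ) (x : Fin n → ℝ) : ℝ :=
  ∫ τ in (0:ℝ)..(1:ℝ), f (Finset.univ.filter (fun i => τ ≤ x i))

namespace LovaszAux

open Finset MeasureTheory

variable {n : ℕ}

/-- The level set `{i : τ ≤ x i}`. -/
noncomputable def lev (x : Fin n → ℝ) (τ : ℝ) : Finset (Fin n) :=
  Finset.univ.filter (fun i => τ ≤ x i)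

/-- The "top part" of a permutation: `{i : k ≤ σ⁻¹ i}`. -/
def Bset (σ : Equiv.Perm (Fin n)) (k : ℕ) : Finset (Fin n) :=
  Finset.univ.filter (fun i => k ≤ ((σ.symm i : Fin n) : ℕ))

lemma mem_Bset {σ : Equiv.Perm (Fin n)} {k : ℕ} {i : Fin n} :
    i ∈ Bset σ k ↔ k ≤ ((σ.symm i : Fin n) : ℕ) := by simp [Bset]

lemma mem_lev {x : Fin n → ℝ} {τ : ℝ} {i : Fin n} : i ∈ lev x τ ↔ τ ≤ x i := by simp [lev]

lemma Bset_zero (σ : Equiv.Perm (Fin n)) : Bset σ 0 = Finset.univ := by simp [Bset]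

lemma Bset_top (σ : Equiv.Perm (Fin n)) : Bset σ n = ∅ := by
  ext i; simp [mem_Bset]

lemma Bset_succ (σ : Equiv.Perm (Fin n)) (k : Fin n) :
    Bset σ (k : ℕ) = insert (σ k) (Bset σ ((k : ℕ) + 1)) := by
  ext i
  simp only [mem_Bset, Finset.mem_insert]
  constructor
  · intro h
    rcases eq_or_lt_of_le h with h' | h'
    · left
      have : σ.symm i = k := Fin.ext h'.symm
      rw [← this, Equiv.apply_symm_apply]
    · right; omega
  · rintro (h | h)
    · subst h; simp
    · omega

lemma not_mem_Bset_succ (σ : Equiv.Perm (Fin n)) (k : Fin n) :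
    σ k ∉ Bset σ ((k : ℕ) + 1) := by simp [mem_Bset]

/-- Telescoping a set function along the chain `B_0 ⊇ B_1 ⊇ ⋯ ⊇ B_n = ∅`. -/
lemma telescope (F : Finset (Fin n) → ℝ) (σ : Equiv.Perm (Fin n)) (S : Finset (Fin n)) :
    F S = F ∅ + ∑ k : Fin n, (F (S ∩ Bset σ k) - F (S ∩ Bset σ ((k : ℕ) + 1))) := by
  have := Finset.sum_range_sub' (fun m => F (S ∩ Bset σ m)) n
  rw [Fin.sum_univ_eq_sum_range (fun m => F (S ∩ Bset σ m) - F (S ∩ Bset σ (m + 1))) n, this,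
    Bset_zero, Bset_top]
  simp

/-- When `x ∘ σ` is monotone, each telescoping increment is an explicit step function. -/
lemma step_eq (F : Finset (Fin n) → ℝ) (x : Fin n → ℝ) (σ : Equiv.Perm (Fin n))
    (hm : Monotone (x ∘ σ)) (k : Fin n) (τ : ℝ) :
    F (lev x τ ∩ Bset σ (k : ℕ)) - F (lev x τ ∩ Bset σ ((k : ℕ) + 1))
      = if τ ≤ x (σ k) then F (Bset σ (k : ℕ)) - F (Bset σ ((k : ℕ) + 1)) else 0 := by
  by_cases h : τ ≤ x (σ k)
  · have hsub : ∀ m : ℕ, (k : ℕ) ≤ m → Bset σ m ⊆ lev x τ := by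
      intro m hm' i hi
      have h1 : (k : ℕ) ≤ ((σ.symm i : Fin n) : ℕ) := le_trans hm' (mem_Bset.1 hi)
      have h2 : x (σ k) ≤ x i := by
        have := hm (show k ≤ σ.symm i from h1)
        simpa using this
      exact mem_lev.2 (le_trans h h2)
    rw [Finset.inter_eq_right.2 (hsub _ le_rfl),
      Finset.inter_eq_right.2 (hsub _ (Nat.le_succ _)), if_pos h]
  · have hnot : σ k ∉ lev x τ := fun hc => h (mem_lev.1 hc)
    have h1 : lev x τ ∩ Bset σ (k : ℕ) = lev x τ ∩ Bset σ ((k : ℕ) + 1) := by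
      rw [Bset_succ, Finset.inter_comm, Finset.insert_inter_of_notMem hnot, Finset.inter_comm]
    rw [h1, if_neg h, sub_self]

/-- For a submodular `f`, each telescoping increment dominates the step function. -/
lemma step_ge {f : Finset (Fin n) → ℝ} (hf : Submodular f) (x : Fin n → ℝ)
    (σ : Equiv.Perm (Fin n)) (k : Fin n) (τ : ℝ) :
    (if τ ≤ x (σ k) then f (Bset σ (k : ℕ)) - f (Bset σ ((k : ℕ) + 1)) else 0)
      ≤ f (lev x τ ∩ Bset σ (k : ℕ)) - f (lev x τ ∩ Bset σ ((k : ℕ) + 1)) := by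
  by_cases h : τ ≤ x (σ k)
  · have hmem : σ k ∈ lev x τ := mem_lev.2 h
    have h1 : lev x τ ∩ Bset σ (k : ℕ) = insert (σ k) (lev x τ ∩ Bset σ ((k : ℕ) + 1)) := by
      rw [Bset_succ, Finset.inter_comm, Finset.insert_inter_of_mem hmem, Finset.inter_comm]
    rw [if_pos h, h1, Bset_succ σ k]
    exact hf (lev x τ ∩ Bset σ ((k : ℕ) + 1)) (Bset σ ((k : ℕ) + 1))
      Finset.inter_subset_right (σ k) (not_mem_Bset_succ σ k)
  · have hnot : σ k ∉ lev x τ := fun hc => h (mem_lev.1 hc)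
    have h1 : lev x τ ∩ Bset σ (k : ℕ) = lev x τ ∩ Bset σ ((k : ℕ) + 1) := by
      rw [Bset_succ, Finset.inter_comm, Finset.insert_inter_of_notMem hnot, Finset.inter_comm]
    rw [h1, if_neg h, sub_self]

lemma indFun_eq (a c : ℝ) :
    (fun τ => if τ ≤ a then c else 0) = Set.indicator {t : ℝ | t ≤ a} (fun _ => c) := by
  funext τ; simp [Set.indicator_apply]

lemma indFun_integrable (a c : ℝ) :
    IntervalIntegrable (fun τ => if τ ≤ a then c else 0) volume 0 1 := by
  rw [indFun_eq]
  have hset : {t : ℝ | t ≤ a} = Set.Iic a := rfl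
  rw [hset]
  constructor <;>
  · rw [MeasureTheory.IntegrableOn, integrable_indicator_iff measurableSet_Iic]
    refine integrableOn_const (ne_of_lt ?_)
    rw [Measure.restrict_apply measurableSet_Iic]
    exact lt_of_le_of_lt (measure_mono Set.inter_subset_right) (by simp)

lemma indFun_integral (a c : ℝ) (ha : a ∈ Set.Icc (0:ℝ) 1) :
    (∫ τ in (0:ℝ)..1, if τ ≤ a then c else 0) = c * a := by
  rw [indFun_eq, intervalIntegral.integral_indicator ha, intervalIntegral.integral_const]
  rw [smul_eq_mul]; ring

/-- The integrand of the Lovász extension written as a step function, for sorted `x`. -/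
lemma integrand_repr (F : Finset (Fin n) → ℝ) (x : Fin n → ℝ) (σ : Equiv.Perm (Fin n))
    (hm : Monotone (x ∘ σ)) (τ : ℝ) :
    F (lev x τ) = F ∅ + ∑ k : Fin n,
      (if τ ≤ x (σ k) then F (Bset σ (k : ℕ)) - F (Bset σ ((k : ℕ) + 1)) else 0) := by
  rw [telescope F σ (lev x τ)]
  congr 1
  exact Finset.sum_congr rfl fun k _ => step_eq F x σ hm k τ

lemma indSum_integrable (F : Finset (Fin n) → ℝ) (x : Fin n → ℝ) (σ : Equiv.Perm (Fin n)) :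
    IntervalIntegrable (fun τ => ∑ k : Fin n,
      (if τ ≤ x (σ k) then F (Bset σ (k : ℕ)) - F (Bset σ ((k : ℕ) + 1)) else 0))
      volume 0 1 := by
  have hs := IntervalIntegrable.sum (μ := volume) (a := (0:ℝ)) (b := (1:ℝ)) Finset.univ
    (f := fun (k : Fin n) (τ : ℝ) =>
      if τ ≤ x (σ k) then F (Bset σ (k : ℕ)) - F (Bset σ ((k : ℕ) + 1)) else 0)
    (fun k _ => indFun_integrable _ _)
  have hfun : (∑ k : Fin n, fun (τ : ℝ) =>
      if τ ≤ x (σ k) then F (Bset σ (k : ℕ)) - F (Bset σ ((k : ℕ) + 1)) else 0)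
      = fun τ => ∑ k : Fin n,
      (if τ ≤ x (σ k) then F (Bset σ (k : ℕ)) - F (Bset σ ((k : ℕ) + 1)) else 0) := by
    funext τ; simp
  rwa [hfun] at hs

lemma stepSum_integrable (F : Finset (Fin n) → ℝ) (x : Fin n → ℝ) (σ : Equiv.Perm (Fin n)) :
    IntervalIntegrable (fun τ => F ∅ + ∑ k : Fin n,
      (if τ ≤ x (σ k) then F (Bset σ (k : ℕ)) - F (Bset σ ((k : ℕ) + 1)) else 0))
      volume 0 1 :=
  intervalIntegrable_const.add (indSum_integrable F x σ)

lemma stepSum_integral (F : Finset (Fin n) → ℝ) (x : Fin n → ℝ) (σ : Equiv.Perm (Fin n))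
    (hx : ∀ i, x i ∈ Set.Icc (0:ℝ) 1) :
    (∫ τ in (0:ℝ)..1, (F ∅ + ∑ k : Fin n,
      (if τ ≤ x (σ k) then F (Bset σ (k : ℕ)) - F (Bset σ ((k : ℕ) + 1)) else 0)))
      = F ∅ + ∑ k : Fin n, (F (Bset σ (k : ℕ)) - F (Bset σ ((k : ℕ) + 1))) * x (σ k) := by
  rw [intervalIntegral.integral_add intervalIntegrable_const (indSum_integrable F x σ),
    intervalIntegral.integral_finset_sum (f := fun (k : Fin n) (τ : ℝ) =>
      if τ ≤ x (σ k) then F (Bset σ (k : ℕ)) - F (Bset σ ((k : ℕ) + 1)) else 0)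
      (fun k _ => indFun_integrable _ _),
    intervalIntegral.integral_const]
  congr 1
  · rw [smul_eq_mul]; ring
  · exact Finset.sum_congr rfl fun k _ => indFun_integral _ _ (hx (σ k))

/-- The Lovász integrand is interval integrable. -/
lemma lev_integrable (F : Finset (Fin n) → ℝ) (x : Fin n → ℝ) :
    IntervalIntegrable (fun τ => F (lev x τ)) volume 0 1 := by
  have hm : Monotone (x ∘ Tuple.sort x) := Tuple.monotone_sort x
  have : (fun τ => F (lev x τ)) = fun τ => F ∅ + ∑ k : Fin n,
      (if τ ≤ x (Tuple.sort x k) then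
        F (Bset (Tuple.sort x) (k : ℕ)) - F (Bset (Tuple.sort x) ((k : ℕ) + 1)) else 0) := by
    funext τ; exact integrand_repr F x (Tuple.sort x) hm τ
  rw [this]
  exact stepSum_integrable F x (Tuple.sort x)

/-- Exact value of the Lovász extension at a point sorted by `σ`. -/
lemma lovasz_eq (F : Finset (Fin n) → ℝ) (x : Fin n → ℝ) (hx : ∀ i, x i ∈ Set.Icc (0:ℝ) 1)
    (σ : Equiv.Perm (Fin n)) (hm : Monotone (x ∘ σ)) :
    lovasz F x = F ∅ + ∑ k : Fin n, (F (Bset σ (k : ℕ)) - F (Bset σ ((k : ℕ) + 1))) * x (σ k) := by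
  have : lovasz F x = ∫ τ in (0:ℝ)..1, (F ∅ + ∑ k : Fin n,
      (if τ ≤ x (σ k) then F (Bset σ (k : ℕ)) - F (Bset σ ((k : ℕ) + 1)) else 0)) := by
    unfold lovasz
    apply intervalIntegral.integral_congr
    intro τ _
    exact integrand_repr F x σ hm τ
  rw [this, stepSum_integral F x σ hx]

/-- Lower bound for the Lovász extension of a submodular function, for any `σ`. -/
lemma lovasz_ge {f : Finset (Fin n) → ℝ} (hf : Submodular f) (x : Fin n → ℝ)
    (hx : ∀ i, x i ∈ Set.Icc (0:ℝ) 1) (σ : Equiv.Perm (Fin n)) :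
    f ∅ + ∑ k : Fin n, (f (Bset σ (k : ℕ)) - f (Bset σ ((k : ℕ) + 1))) * x (σ k)
      ≤ lovasz f x := by
  rw [← stepSum_integral f x σ hx]
  unfold lovasz
  apply intervalIntegral.integral_mono_on (by norm_num) (stepSum_integrable f x σ)
    (lev_integrable f x)
  intro τ _
  calc f ∅ + ∑ k : Fin n,
      (if τ ≤ x (σ k) then f (Bset σ (k : ℕ)) - f (Bset σ ((k : ℕ) + 1)) else 0)
      ≤ f ∅ + ∑ k : Fin n,
        (f (lev x τ ∩ Bset σ (k : ℕ)) - f (lev x τ ∩ Bset σ ((k : ℕ) + 1))) := by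
        gcongr with k hk
        exact step_ge hf x σ k τ
    _ = f (lev x τ) := (telescope f σ (lev x τ)).symm

end LovaszAux

open LovaszAux in
/-- The Lovasz extension of a submodular function is convex on the cube `[0,1]^n`. -/
theorem stmt0 {n : ℕ} (hn : 1 ≤ n) (f : Finset (Fin n) → ℝ) (hf : Submodular f)
    (x y : Fin n → ℝ) (hx : ∀ i, x i ∈ Set.Icc (0:ℝ) 1) (hy : ∀ i, y i ∈ Set.Icc (0:ℝ) 1)
    (l : ℝ) (hl : l ∈ Set.Icc (0:ℝ) 1) :
    lovasz f (fun i => l * x i + (1 - l) * y i) ≤ l * lovasz f x + (1 - l) * lovasz f y := by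
  obtain ⟨hl0, hl1⟩ := hl
  set z : Fin n → ℝ := fun i => l * x i + (1 - l) * y i with hz
  have hzc : ∀ i, z i ∈ Set.Icc (0:ℝ) 1 := by
    intro i
    obtain ⟨hx0, hx1⟩ := hx i
    obtain ⟨hy0, hy1⟩ := hy i
    have h0 : (0:ℝ) ≤ l * x i + (1 - l) * y i := by nlinarith
    have h1 : l * x i + (1 - l) * y i ≤ 1 := by nlinarith
    exact ⟨h0, h1⟩
  set σ := Tuple.sort z with hσ
  have hm : Monotone (z ∘ σ) := Tuple.monotone_sort z
  have hev : lovasz f z = f ∅ + ∑ k : Fin n,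
      (f (Bset σ (k : ℕ)) - f (Bset σ ((k : ℕ) + 1))) * z (σ k) :=
    lovasz_eq f z hzc σ hm
  have hgx := lovasz_ge hf x hx σ
  have hgy := lovasz_ge hf y hy σ
  have hsplit : f ∅ + ∑ k : Fin n,
      (f (Bset σ (k : ℕ)) - f (Bset σ ((k : ℕ) + 1))) * z (σ k)
      = l * (f ∅ + ∑ k : Fin n, (f (Bset σ (k : ℕ)) - f (Bset σ ((k : ℕ) + 1))) * x (σ k))
      + (1 - l) * (f ∅ + ∑ k : Fin n,
          (f (Bset σ (k : ℕ)) - f (Bset σ ((k : ℕ) + 1))) * y (σ k)) := by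
    have : ∀ k : Fin n, (f (Bset σ (k : ℕ)) - f (Bset σ ((k : ℕ) + 1))) * z (σ k)
        = l * ((f (Bset σ (k : ℕ)) - f (Bset σ ((k : ℕ) + 1))) * x (σ k))
        + (1 - l) * ((f (Bset σ (k : ℕ)) - f (Bset σ ((k : ℕ) + 1))) * y (σ k)) := by
      intro k; simp only [hz]; ring
    rw [Finset.sum_congr rfl fun k _ => this k, Finset.sum_add_distrib,
      ← Finset.mul_sum, ← Finset.mul_sum]
    ring
  rw [hev, hsplit]
  have h1x : l * (f ∅ + ∑ k : Fin n,
      (f (Bset σ (k : ℕ)) - f (Bset σ ((k : ℕ) + 1))) * x (σ k)) ≤ l * lovasz f x :=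
    mul_le_mul_of_nonneg_left hgx hl0
  have h1y : (1 - l) * (f ∅ + ∑ k : Fin n,
      (f (Bset σ (k : ℕ)) - f (Bset σ ((k : ℕ) + 1))) * y (σ k)) ≤ (1 - l) * lovasz f y :=
    mul_le_mul_of_nonneg_left hgy (by linarith)
  linarith
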